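/- The function d_{S,k,Λ} is an extended metric on X × G: it is symmetric, satisfies the triangle inequality, vanishes on the diagonal, and satisfies d_{S,k,Λ}((x,g),(y,h)) > 0 whenever (x,g) ≠ (y,h). -/

import Mathlib

open scoped ENNReal

structure HomotopyCoherentAction (G : Type*) [Group G] (X : Type*) [TopologicalSpace X] where
  Γ : List (G × unitInterval) → G → X → X
  continuous' : ∀ (k : ℕ) (γ : Fin k → G) (γ₀ : G),
    Continuous fun p : (Fin k → unitInterval) × X =>
      Γ (List.ofFn fun i => (γ i, p.1 i)) γ₀ p.2
  split : ∀ (L₁ L₂ : List (G × unitInterval)) (γ γ₀ : G) (x : X),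
    Γ (L₁ ++ (γ, 0) :: L₂) γ₀ x = Γ L₁ γ (Γ L₂ γ₀ x)
  mul_mid : ∀ (L₁ L₂ : List (G × unitInterval)) (γ γ' : G) (t : unitInterval) (γ₀ : G) (x : X),
    Γ (L₁ ++ (γ, 1) :: (γ', t) :: L₂) γ₀ x = Γ (L₁ ++ (γ * γ', t) :: L₂) γ₀ x
  mul_last : ∀ (L₁ : List (G × unitInterval)) (γ γ₀ : G) (x : X),
    Γ (L₁ ++ [(γ, 1)]) γ₀ x = Γ L₁ (γ * γ₀) x
  base_one : ∀ (L : List (G × unitInterval)) (γ₁ : G) (t₁ : unitInterval) (x : X),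
    Γ (L ++ [(γ₁, t₁)]) 1 x = Γ L γ₁ x
  unit_mid : ∀ (L₁ L₂ : List (G × unitInterval)) (γ' : G) (t' t : unitInterval) (γ₀ : G) (x : X),
    Γ (L₁ ++ (γ', t') :: (1, t) :: L₂) γ₀ x = Γ (L₁ ++ (γ', t' * t) :: L₂) γ₀ x
  unit_head : ∀ (L : List (G × unitInterval)) (t : unitInterval) (γ₀ : G) (x : X),
    Γ ((1, t) :: L) γ₀ x = Γ L γ₀ x
  unit_nil : ∀ x : X, Γ [] 1 x = x

variable {G : Type*} [Group G] {X : Type*}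

/-- `Γ(r_k, t_k, …, r_1, t_1, r_0, z)` for `r : Fin (k+1) → G`, `t : Fin k → [0,1]`. -/
def gammaWord [TopologicalSpace X] (A : HomotopyCoherentAction G X) {k : ℕ}
    (r : Fin (k + 1) → G) (t : Fin k → unitInterval) (z : X) : X :=
  A.Γ ((List.ofFn fun j : Fin k => (r j.succ, t j)).reverse) (r 0) z

/-- The condition that the data `(xs, zs, a, b)` forms an admissible chain from `(x,g)` to
`(y,h)` in the definition of the extended metric `d_{S,k,Λ}`. -/
def ChainCond [MetricSpace X] (A : HomotopyCoherentAction G X) (S : Set G) (k : ℕ)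
    (x y : X) (g h : G) {l : ℕ} (xs zs : Fin (l + 1) → X) (a b : Fin l → G) : Prop :=
  xs 0 = x ∧ zs (Fin.last l) = y ∧
  g * (List.ofFn fun i : Fin l => (a i)⁻¹ * b i).prod = h ∧
  ∀ i : Fin l, ∃ (r s : Fin (k + 1) → G) (t u : Fin k → unitInterval),
    (∀ j, r j ∈ S) ∧ (∀ j, s j ∈ S) ∧
    a i = (List.ofFn r).reverse.prod ∧ b i = (List.ofFn s).reverse.prod ∧
    gammaWord A r t (zs i.castSucc) = gammaWord A s u (xs i.succ)

/-- The extended metric `d_{S,k,Λ}` on `X × G`. -/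
noncomputable def coherentDist [MetricSpace X] (A : HomotopyCoherentAction G X)
    (S : Set G) (k : ℕ) (Λ : ℝ) (p q : X × G) : ℝ≥0∞ :=
  ⨅ (l : ℕ) (xs : Fin (l + 1) → X) (zs : Fin (l + 1) → X) (a : Fin l → G) (b : Fin l → G)
    (_ : ChainCond A S k p.1 q.1 p.2 q.2 xs zs a b),
      (l : ℝ≥0∞) + ∑ i : Fin (l + 1), ENNReal.ofReal (Λ * dist (xs i) (zs i))

lemma ofFn_rev' {α : Type*} {n : ℕ} (f : Fin n → α) :
    List.ofFn (fun i => f i.rev) = (List.ofFn f).reverse := by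
  apply List.ext_getElem
  · simp
  · intro i h1 h2
    simp only [List.getElem_ofFn, List.getElem_reverse, List.length_ofFn] at *
    congr 1
    ext
    simp [Fin.rev]
    omega

lemma prod_ofFn_rev_inv {G : Type*} [Group G] {n : ℕ} (f : Fin n → G) :
    (List.ofFn fun i => (f i.rev)⁻¹).prod = (List.ofFn f).prod⁻¹ := by
  rw [List.prod_inv_reverse]
  have : List.map (fun x => x⁻¹) (List.ofFn f) = List.ofFn (fun i => (f i)⁻¹) := by
    simp [List.map_ofFn]; rfl
  rw [this, ← ofFn_rev']

lemma ChainCond.symm' [MetricSpace X] {A : HomotopyCoherentAction G X} {S : Set G} {k : ℕ}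
    {x y : X} {g h : G} {l : ℕ} {xs zs : Fin (l + 1) → X} {a b : Fin l → G}
    (hc : ChainCond A S k x y g h xs zs a b) :
    ChainCond A S k y x h g (fun j => zs j.rev) (fun j => xs j.rev)
      (fun i => b i.rev) (fun i => a i.rev) := by
  obtain ⟨h1, h2, h3, h4⟩ := hc
  refine ⟨by simpa using h2, by simpa using h1, ?_, ?_⟩
  · have : (List.ofFn fun i : Fin l => (b i.rev)⁻¹ * a i.rev).prod
        = (List.ofFn fun i : Fin l => (a i)⁻¹ * b i).prod⁻¹ := by
      rw [← prod_ofFn_rev_inv (f := fun i : Fin l => (a i)⁻¹ * b i)]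
      simp [mul_inv_rev]
    rw [this, ← h3]
    group
  · intro i
    obtain ⟨r, s, t, u, hr, hs, har, hbr, heq⟩ := h4 i.rev
    refine ⟨s, r, u, t, hs, hr, hbr, har, ?_⟩
    have e1 : i.castSucc.rev = i.rev.succ := Fin.rev_castSucc i
    have e2 : i.succ.rev = i.rev.castSucc := Fin.rev_succ i
    simp only [e1, e2]
    exact heq.symm

lemma chain_trans [MetricSpace X] {A : HomotopyCoherentAction G X} {S : Set G} {k : ℕ}
    {x y z : X} {g h f : G} {l₁ l₂ : ℕ}
    {xs₁ zs₁ : Fin (l₁ + 1) → X} {a₁ b₁ : Fin l₁ → G}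
    {xs₂ zs₂ : Fin (l₂ + 1) → X} {a₂ b₂ : Fin l₂ → G}
    (h₁ : ChainCond A S k x y g h xs₁ zs₁ a₁ b₁)
    (h₂ : ChainCond A S k y z h f xs₂ zs₂ a₂ b₂) :
    ChainCond A S k x z g f
      (fun i : Fin (l₁ + l₂ + 1) =>
        if _ : (i : ℕ) ≤ l₁ then xs₁ ⟨i, by omega⟩ else xs₂ ⟨i - l₁, by omega⟩)
      (fun i : Fin (l₁ + l₂ + 1) =>
        if _ : (i : ℕ) < l₁ then zs₁ ⟨i, by omega⟩ else zs₂ ⟨i - l₁, by omega⟩)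
      (fun i : Fin (l₁ + l₂) =>
        if hi : (i : ℕ) < l₁ then a₁ ⟨i, hi⟩ else a₂ ⟨i - l₁, by omega⟩)
      (fun i : Fin (l₁ + l₂) =>
        if hi : (i : ℕ) < l₁ then b₁ ⟨i, hi⟩ else b₂ ⟨i - l₁, by omega⟩) := by
  obtain ⟨e1, e2, e3, e4⟩ := h₁
  obtain ⟨f1, f2, f3, f4⟩ := h₂
  refine ⟨?_, ?_, ?_, ?_⟩
  · beta_reduce
    rw [dif_pos (by simp : ((0 : Fin (l₁+l₂+1)) : ℕ) ≤ l₁)]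
    convert e1 using 2
    exact Fin.ext (by simp)
  · have hlast : ¬ ((Fin.last (l₁ + l₂) : ℕ) < l₁) := by simp [Fin.last]
    beta_reduce
    rw [dif_neg hlast]
    convert f2 using 2
    ext
    simp [Fin.last]
  · have split : (List.ofFn fun i : Fin (l₁ + l₂) =>
        ((if hi : (i : ℕ) < l₁ then a₁ ⟨i, hi⟩ else a₂ ⟨i - l₁, by omega⟩)⁻¹ *
         (if hi : (i : ℕ) < l₁ then b₁ ⟨i, hi⟩ else b₂ ⟨i - l₁, by omega⟩)))
        = (List.ofFn fun i : Fin l₁ => (a₁ i)⁻¹ * b₁ i)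
          ++ (List.ofFn fun i : Fin l₂ => (a₂ i)⁻¹ * b₂ i) := by
      rw [List.ofFn_add]
      congr 1
      · refine congrArg List.ofFn (funext fun i => ?_)
        have hi : ((Fin.castAdd l₂ i : ℕ) < l₁) := i.isLt
        simp only [Fin.coe_castLE, dif_pos i.isLt]
      · refine congrArg List.ofFn (funext fun i => ?_)
        have hi : ¬ ((Fin.natAdd l₁ i : ℕ) < l₁) := by simp
        rw [dif_neg hi, dif_neg hi]
        simp
    rw [split, List.prod_append, ← mul_assoc, e3, f3]
  · intro i
    by_cases hi : (i : ℕ) < l₁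
    · obtain ⟨r, s, t, u, hr, hs, har, hbr, heq⟩ := e4 ⟨i, hi⟩
      refine ⟨r, s, t, u, hr, hs, ?_, ?_, ?_⟩
      · beta_reduce; rw [dif_pos hi]; exact har
      · beta_reduce; rw [dif_pos hi]; exact hbr
      · beta_reduce
        simp only [Fin.coe_castSucc, Fin.val_succ]
        have c2 : (i : ℕ) + 1 ≤ l₁ := hi
        rw [dif_pos hi, dif_pos c2]
        exact heq
    · obtain ⟨r, s, t, u, hr, hs, har, hbr, heq⟩ := f4 ⟨(i : ℕ) - l₁, by omega⟩
      refine ⟨r, s, t, u, hr, hs, ?_, ?_, ?_⟩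
      · beta_reduce; rw [dif_neg hi]; exact har
      · beta_reduce; rw [dif_neg hi]; exact hbr
      · beta_reduce
        simp only [Fin.coe_castSucc, Fin.val_succ]
        have c2 : ¬ ((i : ℕ) + 1 ≤ l₁) := by omega
        rw [dif_neg hi, dif_neg c2]
        convert heq using 2
        congr 1
        refine congrArg xs₂ (Fin.ext ?_)
        simp only [Fin.val_succ]
        omega
/-- The function `d_{S,k,Λ}` is an extended metric on `X × G`: it is symmetric, satisfies
the triangle inequality, vanishes on the diagonal, and is positive off the diagonal. -/
theorem coherentDist_isExtendedMetric {G : Type*} [Group G] {X : Type*} [MetricSpace X]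
    (A : HomotopyCoherentAction G X) (S : Set G) (hSfin : S.Finite) (hS1 : (1 : G) ∈ S)
    (k : ℕ) (Λ : ℝ) (hΛ : 0 < Λ) :
    (∀ p q : X × G, coherentDist A S k Λ p q = coherentDist A S k Λ q p) ∧
    (∀ p q r : X × G,
      coherentDist A S k Λ p r ≤ coherentDist A S k Λ p q + coherentDist A S k Λ q r) ∧
    (∀ p : X × G, coherentDist A S k Λ p p = 0) ∧
    (∀ p q : X × G, p ≠ q → 0 < coherentDist A S k Λ p q) := by
  have key : ∀ (p q : X × G) (l : ℕ) (xs zs : Fin (l + 1) → X) (a b : Fin l → G),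
      ChainCond A S k p.1 q.1 p.2 q.2 xs zs a b →
      coherentDist A S k Λ p q ≤
        (l : ℝ≥0∞) + ∑ i : Fin (l + 1), ENNReal.ofReal (Λ * dist (xs i) (zs i)) := by
    intro p q l xs zs a b hc
    simp only [coherentDist]
    exact iInf_le_of_le l <| iInf_le_of_le xs <| iInf_le_of_le zs <| iInf_le_of_le a <|
      iInf_le_of_le b <| iInf_le _ hc
  have symm_le : ∀ p q : X × G, coherentDist A S k Λ q p ≤ coherentDist A S k Λ p q := by
    intro p q
    refine le_iInf fun l => le_iInf fun xs => le_iInf fun zs => le_iInf fun a =>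
      le_iInf fun b => le_iInf fun hc => ?_
    refine (key q p l _ _ _ _ hc.symm').trans (le_of_eq ?_)
    congr 1
    refine Fintype.sum_equiv Fin.revPerm _ _ fun i => ?_
    simp [dist_comm]
  refine ⟨fun p q => le_antisymm (symm_le q p) (symm_le p q), ?_, ?_, ?_⟩
  · -- triangle inequality
    intro p q r
    conv_rhs => rw [coherentDist, coherentDist]
    simp only [ENNReal.iInf_add, ENNReal.add_iInf]
    refine le_iInf fun l₂ => le_iInf fun xs₂ => le_iInf fun zs₂ => le_iInf fun a₂ =>
      le_iInf fun b₂ => le_iInf fun hc₂ => le_iInf fun l₁ => le_iInf fun xs₁ =>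
      le_iInf fun zs₁ => le_iInf fun a₁ => le_iInf fun b₁ => le_iInf fun hc₁ => ?_
    have e0 : zs₁ (Fin.last l₁) = xs₂ 0 := by rw [hc₁.2.1, hc₂.1]
    refine (key p r (l₁ + l₂) _ _ _ _ (chain_trans hc₁ hc₂)).trans ?_
    have hsplit :
        (∑ i : Fin (l₁ + (l₂ + 1)), ENNReal.ofReal (Λ * dist
            (if _ : (i : ℕ) ≤ l₁ then xs₁ ⟨i, by omega⟩ else xs₂ ⟨(i : ℕ) - l₁, by omega⟩)
            (if _ : (i : ℕ) < l₁ then zs₁ ⟨i, by omega⟩ else zs₂ ⟨(i : ℕ) - l₁, by omega⟩)))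
        ≤ (∑ i : Fin (l₁ + 1), ENNReal.ofReal (Λ * dist (xs₁ i) (zs₁ i)))
          + ∑ i : Fin (l₂ + 1), ENNReal.ofReal (Λ * dist (xs₂ i) (zs₂ i)) := by
      rw [Fin.sum_univ_add,
        Fin.sum_univ_castSucc (f := fun i => ENNReal.ofReal (Λ * dist (xs₁ i) (zs₁ i))),
        add_assoc]
      refine add_le_add ?_ ?_
      · refine le_of_eq (Finset.sum_congr rfl fun i _ => ?_)
        have h1 : ((Fin.castAdd (l₂ + 1) i : ℕ)) ≤ l₁ := le_of_lt i.isLt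
        have h2 : ((Fin.castAdd (l₂ + 1) i : ℕ)) < l₁ := i.isLt
        rw [dif_pos h1, dif_pos h2]
        rfl
      · rw [Fin.sum_univ_succ, Fin.sum_univ_succ
          (f := fun i => ENNReal.ofReal (Λ * dist (xs₂ i) (zs₂ i)))]
        refine le_trans
          (add_le_add ?_ (le_of_eq (Finset.sum_congr rfl fun j _ => ?_)))
          (add_assoc _ _ _).le
        · have h1 : ((Fin.natAdd l₁ (0 : Fin (l₂ + 1)) : ℕ)) ≤ l₁ := by simp
          have h2 : ¬ ((Fin.natAdd l₁ (0 : Fin (l₂ + 1)) : ℕ)) < l₁ := by simp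
          rw [dif_pos h1, dif_neg h2]
          have e1 : (⟨((Fin.natAdd l₁ (0 : Fin (l₂ + 1)) : ℕ)), by omega⟩ : Fin (l₁ + 1))
              = Fin.last l₁ := by ext; simp
          have e2 : (⟨((Fin.natAdd l₁ (0 : Fin (l₂ + 1)) : ℕ)) - l₁, by omega⟩ : Fin (l₂ + 1))
              = 0 := by ext; simp
          rw [e1, e2]
          calc ENNReal.ofReal (Λ * dist (xs₁ (Fin.last l₁)) (zs₂ 0))
              ≤ ENNReal.ofReal (Λ * dist (xs₁ (Fin.last l₁)) (xs₂ 0)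
                  + Λ * dist (xs₂ 0) (zs₂ 0)) := by
                refine ENNReal.ofReal_le_ofReal ?_
                rw [← mul_add]
                exact mul_le_mul_of_nonneg_left (dist_triangle _ _ _) hΛ.le
            _ = ENNReal.ofReal (Λ * dist (xs₁ (Fin.last l₁)) (xs₂ 0))
                  + ENNReal.ofReal (Λ * dist (xs₂ 0) (zs₂ 0)) :=
                ENNReal.ofReal_add (by positivity) (by positivity)
            _ = _ := by rw [e0]
        · have h1 : ¬ ((Fin.natAdd l₁ j.succ : ℕ)) ≤ l₁ := by
            simp only [Fin.coe_natAdd, Fin.val_succ]; omega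
          have h2 : ¬ ((Fin.natAdd l₁ j.succ : ℕ)) < l₁ := by
            simp only [Fin.coe_natAdd, Fin.val_succ]; omega
          rw [dif_neg h1, dif_neg h2]
          have e1 : (⟨((Fin.natAdd l₁ j.succ : ℕ)) - l₁, by omega⟩ : Fin (l₂ + 1))
              = j.succ := by ext; simp
          rw [e1]
    refine le_trans (add_le_add_right hsplit _) (le_of_eq ?_)
    push_cast
    ring
  · -- vanishes on the diagonal
    intro p
    refine le_antisymm ?_ zero_le
    have hc : ChainCond A S k p.1 p.1 p.2 p.2 (fun _ : Fin 1 => p.1) (fun _ => p.1)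
        (fun _ : Fin 0 => 1) (fun _ => 1) := by
      refine ⟨rfl, rfl, ?_, fun i => i.elim0⟩
      simp
    refine le_trans (key p p 0 _ _ _ _ hc) ?_
    simp
  · -- positivity off the diagonal
    intro p q hpq
    by_cases hx : p.1 = q.1
    · have hg : p.2 ≠ q.2 := fun h => hpq (Prod.ext hx h)
      refine lt_of_lt_of_le zero_lt_one ?_
      refine le_iInf fun l => le_iInf fun xs => le_iInf fun zs => le_iInf fun a =>
        le_iInf fun b => le_iInf fun hc => ?_
      rcases Nat.eq_zero_or_pos l with rfl | hl
      · exact absurd (by simpa using hc.2.2.1) hg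
      · calc (1 : ℝ≥0∞) ≤ (l : ℝ≥0∞) := by exact_mod_cast hl
          _ ≤ _ := le_self_add
    · have hd : 0 < Λ * dist p.1 q.1 := mul_pos hΛ (dist_pos.2 hx)
      refine lt_of_lt_of_le (lt_min zero_lt_one (ENNReal.ofReal_pos.2 hd)) ?_
      refine le_iInf fun l => le_iInf fun xs => le_iInf fun zs => le_iInf fun a =>
        le_iInf fun b => le_iInf fun hc => ?_
      rcases Nat.eq_zero_or_pos l with rfl | hl
      · refine le_trans (min_le_right _ _) ?_
        rw [Fin.sum_univ_one]
        have hxz : dist p.1 q.1 = dist (xs 0) (zs 0) := by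
          rw [hc.1, congrArg zs (Subsingleton.elim (0 : Fin 1) (Fin.last 0)), hc.2.1]
        simp [hxz]
      · refine le_trans (min_le_left _ _) ?_
        calc (1 : ℝ≥0∞) ≤ (l : ℝ≥0∞) := by exact_mod_cast hl
          _ ≤ _ := le_self_add
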